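/- (Generalized Pythagorean Theorem) Let x ∈ 𝐇, and let y, z ∈ ℝ³ satisfy z ∗ z = −1, y ∗ y = 1 or y ∗ y = −1, with neither y nor z a scalar multiple of x. If the angle at x is a right angle, i.e., t_x(z) ∗ t_x(y) = 0, then −(z ∗ y) = (z ∗ x)(x ∗ y). -/
import Mathlib


noncomputable section

/-- The Lorentzian inner product `u ∗ v = u₁v₁ + u₂v₂ − u₃v₃` on ℝ³. -/
def lor (u v : Fin 3 → ℝ) : ℝ := u 0 * v 0 + u 1 * v 1 - u 2 * v 2

/-- The hyperboloid model of the hyperbolic plane. -/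
def Hyp : Set (Fin 3 → ℝ) := {u | lor u u = -1 ∧ 0 < u 2}

/-- The Lorentzian cross product `u ⊗ v = J (u × v)`, `J = diag(1,1,−1)`. -/
def lcross (u v : Fin 3 → ℝ) : Fin 3 → ℝ :=
  ![u 1 * v 2 - u 2 * v 1, u 2 * v 0 - u 0 * v 2, -(u 0 * v 1 - u 1 * v 0)]

/-- Lorentzian magnitude `‖w‖ = √(w ∗ w)` (for `w` with `w ∗ w ≥ 0`). -/
def lnorm (w : Fin 3 → ℝ) : ℝ := Real.sqrt (lor w w)

/-- The unit tangent vector at `p` toward `y`: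
`t_p(y) = (y + (p ∗ y)p)/√(y ∗ y + (p ∗ y)²)`. -/
def tang (p y : Fin 3 → ℝ) : Fin 3 → ℝ :=
  (Real.sqrt (lor y y + lor p y ^ 2))⁻¹ • (y + lor p y • p)

/-- Inverse hyperbolic cosine. -/
def arcosh (x : ℝ) : ℝ := Real.log (x + Real.sqrt (x ^ 2 - 1))

/-- Hyperbolic distance between points of the hyperboloid: `d(p,q) = arccosh(−p ∗ q)`. -/
def dHyp (p q : Fin 3 → ℝ) : ℝ := arcosh (-lor p q)

lemma key_sq (x v : Fin 3 → ℝ) (hx : lor x x = -1) (hv : lor v v = -1)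
    (h : ¬ ∃ t : ℝ, v = t • x) : 1 < lor x v ^ 2 := by
  unfold lor at hx hv ⊢
  have hc : x 2 ≠ 0 := by nlinarith [sq_nonneg (x 0), sq_nonneg (x 1)]
  by_cases hw : (x 1 * v 2 - x 2 * v 1 = 0) ∧ (x 2 * v 0 - x 0 * v 2 = 0)
  · exfalso; apply h
    refine ⟨v 2 / x 2, ?_⟩
    funext i
    fin_cases i
    · show v 0 = v 2 / x 2 * x 0
      field_simp; nlinarith [hw.2]
    · show v 1 = v 2 / x 2 * x 1
      field_simp; nlinarith [hw.1]
    · show v 2 = v 2 / x 2 * x 2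
      field_simp
  · have hpos : 0 < (x 1 * v 2 - x 2 * v 1)^2 + (x 2 * v 0 - x 0 * v 2)^2 := by
      rcases not_and_or.mp hw with h1 | h1 <;>
        nlinarith [sq_nonneg (x 1 * v 2 - x 2 * v 1), sq_nonneg (x 2 * v 0 - x 0 * v 2),
          sq_pos_of_ne_zero h1]
    have hid : (x 2)^2 * ((x 0 * v 0 + x 1 * v 1 - x 2 * v 2)^2 - 1)
        = (x 1 * v 2 - x 2 * v 1)^2 + (x 2 * v 0 - x 0 * v 2)^2
          + (x 1 * (x 1 * v 2 - x 2 * v 1) - x 0 * (x 2 * v 0 - x 0 * v 2))^2 := by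
      linear_combination
        ((x 2)^2 * (v 0 * v 0 + v 1 * v 1 - v 2 * v 2 + 1) - (x 2)^2
          - (x 1 * v 2 - x 2 * v 1)^2 - (x 2 * v 0 - x 0 * v 2)^2) * hx
        + (-(x 2)^2) * hv
    nlinarith [sq_pos_of_ne_zero hc,
      sq_nonneg (x 1 * (x 1 * v 2 - x 2 * v 1) - x 0 * (x 2 * v 0 - x 0 * v 2))]

/-- The Generalized Pythagorean Theorem (Corollary 3.4): if the angle at `x` is right,
i.e., `t_x(z) ∗ t_x(y) = 0`, then `−(z ∗ y) = (z ∗ x)(x ∗ y)`. -/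
theorem generalized_pythagorean
    (x y z : Fin 3 → ℝ) (hx : x ∈ Hyp)
    (hz : lor z z = -1) (hy : lor y y = 1 ∨ lor y y = -1)
    (hyx : ¬ ∃ t : ℝ, y = t • x) (hzx : ¬ ∃ t : ℝ, z = t • x)
    (hright : lor (tang x z) (tang x y) = 0) :
    -(lor z y) = lor z x * lor x y := by
  have hxx : lor x x = -1 := hx.1
  have hSz : 0 < lor z z + lor x z ^ 2 := by
    have := key_sq x z hxx hz hzx; linarith
  have hSy : 0 < lor y y + lor x y ^ 2 := by
    rcases hy with hy | hy
    · nlinarith [sq_nonneg (lor x y)]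
    · have := key_sq x y hxx hy hyx; linarith
  have hsz : (Real.sqrt (lor z z + lor x z ^ 2))⁻¹ ≠ 0 :=
    inv_ne_zero (ne_of_gt (Real.sqrt_pos.mpr hSz))
  have hsy : (Real.sqrt (lor y y + lor x y ^ 2))⁻¹ ≠ 0 :=
    inv_ne_zero (ne_of_gt (Real.sqrt_pos.mpr hSy))
  have expand : lor (tang x z) (tang x y)
      = (Real.sqrt (lor z z + lor x z ^ 2))⁻¹ * (Real.sqrt (lor y y + lor x y ^ 2))⁻¹
        * (lor z y + lor x z * lor x y) := by
    unfold lor at hxx ⊢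
    simp only [tang, lor, Pi.smul_apply, Pi.add_apply, smul_eq_mul]
    linear_combination
      ((Real.sqrt (z 0 * z 0 + z 1 * z 1 - z 2 * z 2
            + (x 0 * z 0 + x 1 * z 1 - x 2 * z 2) ^ 2))⁻¹
        * (Real.sqrt (y 0 * y 0 + y 1 * y 1 - y 2 * y 2
            + (x 0 * y 0 + x 1 * y 1 - x 2 * y 2) ^ 2))⁻¹
        * (x 0 * z 0 + x 1 * z 1 - x 2 * z 2)
        * (x 0 * y 0 + x 1 * y 1 - x 2 * y 2)) * hxx
  rw [expand] at hright
  have h0 : lor z y + lor x z * lor x y = 0 := by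
    rcases mul_eq_zero.mp hright with h | h
    · rcases mul_eq_zero.mp h with h | h
      · exact absurd h hsz
      · exact absurd h hsy
    · exact h
  have hcomm : lor z x = lor x z := by unfold lor; ring
  rw [hcomm]; linarith
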